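/- For any vectors v, w ∈ ℝ^p with ‖v‖₀ ≤ s, setting u = w − v, one has ‖v‖_Λ − ‖w‖_Λ ≤ Σ_{j=1}^s λ_j |u|^↓_j − Σ_{j=s+1}^p λ_j |u|^↓_j. -/

import Mathlib

open MeasureTheory ProbabilityTheory Matrix

/-- The non-increasing rearrangement of the amplitudes `(|θ 1|, …, |θ p|)`. -/
noncomputable def dsort {p : ℕ} (θ : Fin p → ℝ) : Fin p → ℝ :=
  fun j => |θ (Tuple.sort (fun i => |θ i|) j.rev)|

/-- The ordered ℓ1 (Slope) norm `‖θ‖_Λ = ∑ j, λ_j |θ|^↓_j`. -/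
noncomputable def slopeNorm {p : ℕ} (lam θ : Fin p → ℝ) : ℝ :=
  ∑ j, lam j * dsort θ j

/-- The dual norm of the Slope norm: `‖v‖* = sup_{‖θ‖_Λ ≤ 1} ⟨v, θ⟩`. -/
noncomputable def dualSlopeNorm {p : ℕ} (lam v : Fin p → ℝ) : ℝ :=
  sSup {x : ℝ | ∃ θ : Fin p → ℝ, slopeNorm lam θ ≤ 1 ∧ x = ∑ j, v j * θ j}

/-- Euclidean norm of a vector. -/
noncomputable def enorm2 {n : ℕ} (v : Fin n → ℝ) : ℝ :=
  Real.sqrt (∑ i, (v i) ^ 2)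

/-- Number of nonzero entries. -/
noncomputable def l0 {p : ℕ} (u : Fin p → ℝ) : ℕ := Set.ncard {j | u j ≠ 0}

/-- `Λ(λ, s) = (∑_{j=1}^s λ_j²)^{1/2}` (with 0-based indexing: `j < s`). -/
noncomputable def LamS {p : ℕ} (lam : Fin p → ℝ) (s : ℕ) : ℝ :=
  Real.sqrt (∑ j ∈ Finset.univ.filter (fun j : Fin p => (j : ℕ) < s), (lam j) ^ 2)

/-- `∑_{j=1}^s λ_j |u|^↓_j` (0-based: indices `j < s`). -/
noncomputable def headSum {p : ℕ} (lam : Fin p → ℝ) (s : ℕ) (u : Fin p → ℝ) : ℝ :=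
  ∑ j ∈ Finset.univ.filter (fun j : Fin p => (j : ℕ) < s), lam j * dsort u j

/-- `∑_{j=s+1}^p λ_j |u|^↓_j` (0-based: indices `s ≤ j`). -/
noncomputable def tailSum {p : ℕ} (lam : Fin p → ℝ) (s : ℕ) (u : Fin p → ℝ) : ℝ :=
  ∑ j ∈ Finset.univ.filter (fun j : Fin p => s ≤ (j : ℕ)), lam j * dsort u j

/-- An undirected graph on the vertex set `[n]` with `p` (distinct) edges,
each edge recorded as an ordered pair `(min, max)`. -/
structure GraphOn (n p : ℕ) where
  edge : Fin p → Fin n × Fin n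
  lt : ∀ e, (edge e).1 < (edge e).2
  inj : Function.Injective edge

/-- The edge-vertex incidence matrix `Dᵀ ∈ ℝ^{p × n}`:
`(Dᵀ)_{e,v} = +1` if `v = min(i,j)`, `-1` if `v = max(i,j)`, `0` otherwise. -/
def GraphOn.incT {n p : ℕ} (G : GraphOn n p) : Matrix (Fin p) (Fin n) ℝ :=
  Matrix.of fun e v =>
    if v = (G.edge e).1 then 1 else if v = (G.edge e).2 then -1 else 0

/-- The simple graph associated to a `GraphOn`. -/
def GraphOn.toSimpleGraph {n p : ℕ} (G : GraphOn n p) : SimpleGraph (Fin n) :=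
  SimpleGraph.fromRel fun i j => ∃ e, G.edge e = (i, j)

/-- The compatibility factor `κ(s)`. -/
noncomputable def kappa {n p : ℕ} (G : GraphOn n p) (lam : Fin p → ℝ) (s : ℕ) : ℝ :=
  sInf ((fun v : Fin n → ℝ => enorm2 v / enorm2 (G.incT.mulVec v)) ''
    {v : Fin n → ℝ |
      3 * LamS lam s * enorm2 (G.incT.mulVec v) > tailSum lam s (G.incT.mulVec v)})

/-- The four Penrose conditions: `B` is the Moore–Penrose pseudo-inverse of `A`. -/
def IsMoorePenrose {m k : ℕ} (A : Matrix (Fin m) (Fin k) ℝ)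
    (B : Matrix (Fin k) (Fin m) ℝ) : Prop :=
  A * B * A = A ∧ B * A * B = B ∧ (A * B)ᵀ = A * B ∧ (B * A)ᵀ = B * A

/-- `ρ(G) = max_j ‖(Dᵀ)† e_j‖₂`, where `B = (Dᵀ)†`. -/
noncomputable def rhoG {n p : ℕ} (B : Matrix (Fin n) (Fin p) ℝ) : ℝ :=
  ⨆ j : Fin p, enorm2 (fun i => B i j)

/-- `P` is the matrix of the orthogonal (Euclidean) projection onto `ker Dᵀ`:
symmetric, idempotent, range contained in the kernel, fixing the kernel. -/
def IsOrthProjKer {n p : ℕ} (G : GraphOn n p) (P : Matrix (Fin n) (Fin n) ℝ) : Prop :=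
  Pᵀ = P ∧ P * P = P ∧ (∀ v : Fin n → ℝ, G.incT.mulVec (P.mulVec v) = 0) ∧
    ∀ v : Fin n → ℝ, G.incT.mulVec v = 0 → P.mulVec v = v

/-- The Graph-Slope objective `β ↦ (1/(2n))‖y - β‖² + ‖Dᵀβ‖_Λ`. -/
noncomputable def gslopeObj {n p : ℕ} (G : GraphOn n p) (lam : Fin p → ℝ)
    (y β : Fin n → ℝ) : ℝ :=
  (1 / (2 * (n : ℝ))) * (enorm2 (y - β)) ^ 2 + slopeNorm lam (G.incT.mulVec β)

namespace Stmt5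
variable {p : ℕ}


variable {p : ℕ}

noncomputable def sortE (θ : Fin p → ℝ) : Equiv.Perm (Fin p) :=
  Fin.revPerm.trans (Tuple.sort fun i => |θ i|)

lemma dsort_eq (θ : Fin p → ℝ) (j : Fin p) : dsort θ j = |θ (sortE θ j)| := rfl

lemma dsort_nonneg (θ : Fin p → ℝ) (j : Fin p) : 0 ≤ dsort θ j := abs_nonneg _

lemma dsort_antitone (θ : Fin p → ℝ) : Antitone (dsort θ) := by
  intro i j hij
  exact Tuple.monotone_sort (fun i => |θ i|) (Fin.rev_le_rev.mpr hij)

noncomputable def Topk (θ : Fin p → ℝ) (k : ℕ) : ℝ :=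
  ∑ j ∈ Finset.univ.filter (fun j : Fin p => (j : ℕ) < k), dsort θ j

lemma card_filter_lt (k : ℕ) (hk : k ≤ p) :
    (Finset.univ.filter fun j : Fin p => (j : ℕ) < k).card = k := by
  rcases eq_or_lt_of_le hk with h | h
  · subst h
    rw [Finset.filter_true_of_mem (fun j _ => j.isLt), Finset.card_univ, Fintype.card_fin]
  · have he : (Finset.univ.filter fun j : Fin p => (j : ℕ) < k) = Finset.Iio ⟨k, h⟩ := by
      ext j; simp [Finset.mem_Iio, Fin.lt_def]
    rw [he]
    exact Fin.card_Iio _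

/-- Sum of an antitone nonneg function over any finset of card ≤ k is at most the
sum over the first k indices. -/
lemma sum_le_head (g : Fin p → ℝ) (hg : Antitone g) (hg0 : ∀ j, 0 ≤ g j)
    (T : Finset (Fin p)) (k : ℕ) (hT : T.card ≤ k) :
    ∑ j ∈ T, g j ≤ ∑ j ∈ Finset.univ.filter (fun j : Fin p => (j : ℕ) < k), g j := by
  set I := Finset.univ.filter (fun j : Fin p => (j : ℕ) < k) with hI
  by_cases hk : k ≤ p
  · have hIcard : I.card = k := card_filter_lt k hk
    have hBC : (T \ I).card ≤ (I \ T).card := by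
      have h1 := Finset.card_sdiff_add_card_inter T I
      have h2 := Finset.card_sdiff_add_card_inter I T
      have h3 : (T ∩ I).card = (I ∩ T).card := by rw [Finset.inter_comm]
      omega
    obtain ⟨J, hJsub, hJcard⟩ := Finset.exists_subset_card_eq hBC
    have hJcard' : Fintype.card (T \ I : Finset (Fin p)) = Fintype.card (J : Finset (Fin p)) := by
      rw [Fintype.card_coe, Fintype.card_coe, hJcard]
    let e : (T \ I : Finset (Fin p)) ≃ (J : Finset (Fin p)) := Fintype.equivOfCardEq hJcard'
    have hstep : ∑ j ∈ T \ I, g j ≤ ∑ j ∈ J, g j := by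
      rw [← Finset.sum_coe_sort (T \ I) g, ← Finset.sum_coe_sort J g]
      rw [← Equiv.sum_comp e (fun y : (J : Finset (Fin p)) => g y)]
      apply Finset.sum_le_sum
      intro x _
      apply hg
      have hx : ¬ ((x : Fin p) : ℕ) < k := by
        have h2 := (Finset.mem_sdiff.mp x.2).2
        simp only [hI, Finset.mem_filter, Finset.mem_univ, true_and] at h2
        exact h2
      have hex : ((e x : Fin p) : ℕ) < k := by
        have h2 := (Finset.mem_sdiff.mp (hJsub (e x).2)).1
        simp only [hI, Finset.mem_filter, Finset.mem_univ, true_and] at h2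
        exact h2
      exact Fin.le_def.mpr (by omega)
    calc ∑ j ∈ T, g j = ∑ j ∈ T ∩ I, g j + ∑ j ∈ T \ I, g j :=
          (Finset.sum_inter_add_sum_sdiff T I g).symm
      _ ≤ ∑ j ∈ T ∩ I, g j + ∑ j ∈ J, g j := by linarith
      _ = ∑ j ∈ (T ∩ I) ∪ J, g j := by
          rw [Finset.sum_union]
          exact Finset.disjoint_left.mpr fun a ha haJ => by
            have h1 := (Finset.mem_inter.mp ha).1
            have h2 := Finset.mem_sdiff.mp (hJsub haJ)
            exact h2.2 h1
      _ ≤ ∑ j ∈ I, g j := by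
          apply Finset.sum_le_sum_of_subset_of_nonneg
          · apply Finset.union_subset
            · exact Finset.inter_subset_right
            · exact hJsub.trans Finset.sdiff_subset
          · exact fun j _ _ => hg0 j
  · have hIuniv : I = Finset.univ := by
      ext j; simp [hI]; omega
    rw [hIuniv]
    apply Finset.sum_le_sum_of_subset_of_nonneg (Finset.subset_univ T)
    exact fun j _ _ => hg0 j

/-- Sum of |θ| over any finset of card ≤ k is at most Topk. -/
lemma sum_abs_le_topk (θ : Fin p → ℝ) (T : Finset (Fin p)) (k : ℕ) (hT : T.card ≤ k) :
    ∑ i ∈ T, |θ i| ≤ Topk θ k := by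
  have him : ∑ j ∈ T.image (sortE θ).symm, dsort θ j = ∑ i ∈ T, |θ i| := by
    rw [Finset.sum_image (fun a _ b _ h => (sortE θ).symm.injective h)]
    apply Finset.sum_congr rfl
    intro i _
    rw [dsort_eq, Equiv.apply_symm_apply]
  have hcard : (T.image (sortE θ).symm).card ≤ k := by
    rw [Finset.card_image_of_injective _ (sortE θ).symm.injective]; exact hT
  calc ∑ i ∈ T, |θ i| = ∑ j ∈ T.image (sortE θ).symm, dsort θ j := him.symm
    _ ≤ _ := sum_le_head (dsort θ) (dsort_antitone θ) (dsort_nonneg θ) _ k hcard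

/-- Realizer of Topk. -/
lemma topk_realizer (θ : Fin p → ℝ) (k : ℕ) (hk : k ≤ p) :
    ∃ T : Finset (Fin p), T.card = k ∧ ∑ i ∈ T, |θ i| = Topk θ k := by
  refine ⟨(Finset.univ.filter fun j : Fin p => (j : ℕ) < k).image (sortE θ), ?_, ?_⟩
  · rw [Finset.card_image_of_injective _ (sortE θ).injective]
    exact card_filter_lt k hk
  · rw [Finset.sum_image (fun a _ b _ h => (sortE θ).injective h)]
    apply Finset.sum_congr rfl
    intro j _
    rw [dsort_eq]

lemma topk_le_l1 (θ : Fin p → ℝ) (k : ℕ) : Topk θ k ≤ ∑ i, |θ i| := by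
  have h : ∑ j : Fin p, dsort θ j = ∑ i, |θ i| := by
    simp_rw [dsort_eq]
    exact Equiv.sum_comp (sortE θ) (fun i => |θ i|)
  rw [← h]
  apply Finset.sum_le_sum_of_subset_of_nonneg (Finset.filter_subset _ _)
  exact fun j _ _ => dsort_nonneg θ j



lemma ps1 (v w : Fin p → ℝ) (k : ℕ) (hk : k ≤ p) :
    Topk v k ≤ Topk w k + Topk (w - v) k := by
  obtain ⟨T, hTcard, hTsum⟩ := topk_realizer v k hk
  have h1 : ∑ i ∈ T, |v i| ≤ ∑ i ∈ T, |w i| + ∑ i ∈ T, |(w - v) i| := by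
    rw [← Finset.sum_add_distrib]
    apply Finset.sum_le_sum
    intro i _
    have hv : v i = w i - (w - v) i := by simp
    rw [hv]
    exact abs_sub _ _
  have h2 := sum_abs_le_topk w T k hTcard.le
  have h3 := sum_abs_le_topk (w - v) T k hTcard.le
  linarith [hTsum]

lemma ps2 (v w : Fin p → ℝ) (s k : ℕ) (hsk : s ≤ k) (hk : k ≤ p)
    (hv : (Finset.univ.filter fun i => v i ≠ 0).card ≤ s) :
    Topk v k + Topk (w - v) k ≤ Topk w k + 2 * Topk (w - v) s := by
  set u := w - v with hu
  set S := Finset.univ.filter (fun i => v i ≠ 0) with hS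
  obtain ⟨T, hTcard, hTsum⟩ := topk_realizer u k hk
  have hm : (S \ T).card ≤ (T \ S).card := by
    have h1 := Finset.card_sdiff_add_card_inter S T
    have h2 := Finset.card_sdiff_add_card_inter T S
    have h3 : (S ∩ T).card = (T ∩ S).card := by rw [Finset.inter_comm]
    omega
  obtain ⟨R, hRsub, hRcard⟩ := Finset.exists_subset_card_eq hm
  set O := (T \ S) \ R with hO
  have hdisj1 : Disjoint (T ∩ S) R := Finset.disjoint_left.mpr fun a ha haR =>
    (Finset.mem_sdiff.mp (hRsub haR)).2 (Finset.mem_inter.mp ha).2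
  have hdisj2 : Disjoint S O := Finset.disjoint_left.mpr fun a ha haO =>
    (Finset.mem_sdiff.mp (Finset.mem_sdiff.mp haO).1).2 ha
  have hcard1 : ((T ∩ S) ∪ R).card ≤ s := by
    rw [Finset.card_union_of_disjoint hdisj1, hRcard]
    have h1 := Finset.card_sdiff_add_card_inter S T
    have h3 : (S ∩ T).card = (T ∩ S).card := by rw [Finset.inter_comm]
    omega
  have hOcard : O.card = (T \ S).card - R.card := Finset.card_sdiff_of_subset hRsub
  have hcard2 : (S ∪ O).card ≤ k := by
    rw [Finset.card_union_of_disjoint hdisj2, hOcard, hRcard]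
    have h1 := Finset.card_sdiff_add_card_inter S T
    have h2 := Finset.card_sdiff_add_card_inter T S
    have h3 : (S ∩ T).card = (T ∩ S).card := by rw [Finset.inter_comm]
    omega
  -- sums
  have split1 : ∑ i ∈ T ∩ S, |u i| + ∑ i ∈ T \ S, |u i| = ∑ i ∈ T, |u i| :=
    Finset.sum_inter_add_sum_sdiff T S _
  have split2 : ∑ i ∈ O, |u i| + ∑ i ∈ R, |u i| = ∑ i ∈ T \ S, |u i| :=
    Finset.sum_sdiff hRsub
  have key1 : ∑ i ∈ T ∩ S, |u i| + ∑ i ∈ R, |u i| ≤ Topk u s := by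
    rw [← Finset.sum_union hdisj1]
    exact sum_abs_le_topk u _ s hcard1
  have keyO : ∑ i ∈ O, |u i| = ∑ i ∈ O, |w i| := by
    apply Finset.sum_congr rfl
    intro i hiO
    have hiS : i ∉ S := Finset.disjoint_right.mp hdisj2 hiO
    have hvi : v i = 0 := by
      by_contra hne
      exact hiS (by simp [hS, hne])
    simp [hu, hvi]
  have key3 : ∑ i ∈ S, |w i| + ∑ i ∈ O, |w i| ≤ Topk w k := by
    rw [← Finset.sum_union hdisj2]
    exact sum_abs_le_topk w _ k hcard2
  have key5 : ∑ i ∈ S, |v i| ≤ ∑ i ∈ S, |w i| + ∑ i ∈ S, |u i| := by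
    rw [← Finset.sum_add_distrib]
    apply Finset.sum_le_sum
    intro i _
    have hv' : v i = w i - u i := by simp [hu]
    rw [hv']; exact abs_sub _ _
  have key5b : ∑ i ∈ S, |u i| ≤ Topk u s := sum_abs_le_topk u S s hv
  have key6 : Topk v k ≤ ∑ i ∈ S, |v i| := by
    have : ∑ i ∈ S, |v i| = ∑ i, |v i| := by
      apply Finset.sum_subset (Finset.subset_univ S)
      intro i _ hiS
      have hvi : v i = 0 := by
        by_contra hne
        exact hiS (by simp [hS, hne])
      simp [hvi]
    rw [this]
    exact topk_le_l1 v k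
  linarith

lemma abel_nonneg : ∀ (n : ℕ) (lam c : ℕ → ℝ),
    (∀ i j, i ≤ j → j < n → lam j ≤ lam i) → (∀ i, i < n → 0 ≤ lam i) →
    (∀ k, k ≤ n → 0 ≤ ∑ i ∈ Finset.range k, c i) →
    0 ≤ ∑ i ∈ Finset.range n, lam i * c i := by
  intro n
  induction n with
  | zero => simp
  | succ n ih =>
    intro lam c hm h0 hC
    have h1 : 0 ≤ ∑ i ∈ Finset.range n, (lam i - lam n) * c i :=
      ih (fun i => lam i - lam n) c
        (fun i j hij hj => by
          have := hm i j hij (hj.trans (Nat.lt_succ_self n)); linarith)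
        (fun i hi => by
          have := hm i n (Nat.le_of_lt hi) (Nat.lt_succ_self n); linarith)
        (fun k hk => hC k (hk.trans (Nat.le_succ n)))
    have h2 : 0 ≤ lam n * ∑ i ∈ Finset.range (n + 1), c i :=
      mul_nonneg (h0 n (Nat.lt_succ_self n)) (hC (n + 1) le_rfl)
    have key : ∑ i ∈ Finset.range (n + 1), lam i * c i
        = ∑ i ∈ Finset.range n, (lam i - lam n) * c i
          + lam n * ∑ i ∈ Finset.range (n + 1), c i := by
      have e1 : ∑ i ∈ Finset.range (n + 1), (lam i - lam n) * c i
          = ∑ i ∈ Finset.range n, (lam i - lam n) * c i := by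
        rw [Finset.sum_range_succ]; simp
      rw [← e1, Finset.mul_sum, ← Finset.sum_add_distrib]
      apply Finset.sum_congr rfl; intro i _; ring
    rw [key]
    linarith


lemma topk_nonneg (θ : Fin p → ℝ) (k : ℕ) : 0 ≤ Topk θ k :=
  Finset.sum_nonneg fun j _ => dsort_nonneg θ j

lemma topk_mono (θ : Fin p → ℝ) {k₁ k₂ : ℕ} (h : k₁ ≤ k₂) : Topk θ k₁ ≤ Topk θ k₂ := by
  apply Finset.sum_le_sum_of_subset_of_nonneg
  · intro j hj
    simp only [Finset.mem_filter, Finset.mem_univ, true_and] at *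
    omega
  · exact fun j _ _ => dsort_nonneg θ j

lemma sum_range_dite (f : Fin p → ℝ) (k : ℕ) (hk : k ≤ p) :
    ∑ i ∈ Finset.range k, (if h : i < p then f ⟨i, h⟩ else 0)
      = ∑ j ∈ Finset.univ.filter (fun j : Fin p => (j : ℕ) < k), f j := by
  rw [Finset.sum_filter]
  have h1 : ∑ j : Fin p, (if (j : ℕ) < k then f j else 0)
      = ∑ i ∈ Finset.range p, (if h : i < p then (if i < k then f ⟨i, h⟩ else 0) else 0) := by
    rw [← Fin.sum_univ_eq_sum_range (fun i => if h : i < p then (if i < k then f ⟨i, h⟩ else 0) else 0) p]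
    apply Finset.sum_congr rfl
    intro j _
    rw [dif_pos j.isLt]
  have h2 : ∑ i ∈ Finset.range p, (if h : i < p then (if i < k then f ⟨i, h⟩ else 0) else 0)
      = ∑ i ∈ Finset.range k, (if h : i < p then (if i < k then f ⟨i, h⟩ else 0) else 0) := by
    symm
    apply Finset.sum_subset (Finset.range_subset_range.mpr hk)
    intro i _ hik
    rw [Finset.mem_range, not_lt] at hik
    by_cases h : i < p
    · rw [dif_pos h, if_neg (by omega)]
    · rw [dif_neg h]
  rw [h1, h2]
  apply Finset.sum_congr rfl
  intro i hi
  rw [Finset.mem_range] at hi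
  have hp : i < p := lt_of_lt_of_le hi hk
  simp [hp, hi]

/-- the partial sums of the `c` sequence are nonneg -/
lemma ps_main (v w : Fin p → ℝ) (s k : ℕ) (hk : k ≤ p)
    (hv : (Finset.univ.filter fun i => v i ≠ 0).card ≤ s) :
    0 ≤ ∑ j ∈ Finset.univ.filter (fun j : Fin p => (j : ℕ) < k),
      (dsort w j + (if (j : ℕ) < s then dsort (w - v) j else 0)
        - (dsort v j + (if s ≤ (j : ℕ) then dsort (w - v) j else 0))) := by
  set u := w - v with hu
  have hsplit : ∑ j ∈ Finset.univ.filter (fun j : Fin p => (j : ℕ) < k),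
      (dsort w j + (if (j : ℕ) < s then dsort u j else 0)
        - (dsort v j + (if s ≤ (j : ℕ) then dsort u j else 0)))
      = Topk w k + (∑ j ∈ Finset.univ.filter (fun j : Fin p => (j : ℕ) < k),
          if (j : ℕ) < s then dsort u j else 0)
        - Topk v k - (∑ j ∈ Finset.univ.filter (fun j : Fin p => (j : ℕ) < k),
          if s ≤ (j : ℕ) then dsort u j else 0) := by
    rw [Topk, Topk, ← Finset.sum_add_distrib, ← Finset.sum_sub_distrib, ← Finset.sum_sub_distrib]
    apply Finset.sum_congr rfl
    intro j _
    ring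
  have hH : (∑ j ∈ Finset.univ.filter (fun j : Fin p => (j : ℕ) < k),
      if (j : ℕ) < s then dsort u j else 0) = Topk u (min k s) := by
    rw [← Finset.sum_filter, Finset.filter_filter, Topk]
    apply Finset.sum_congr _ (fun _ _ => rfl)
    ext j
    simp only [Finset.mem_filter, Finset.mem_univ, true_and]
    omega
  have hT : (∑ j ∈ Finset.univ.filter (fun j : Fin p => (j : ℕ) < k),
      if s ≤ (j : ℕ) then dsort u j else 0) = Topk u k - Topk u (min k s) := by
    have hpart := Finset.sum_filter_add_sum_filter_not
      (Finset.univ.filter (fun j : Fin p => (j : ℕ) < k))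
      (fun j : Fin p => (j : ℕ) < s) (dsort u)
    have e1 : (∑ j ∈ Finset.univ.filter (fun j : Fin p => (j : ℕ) < k),
        if s ≤ (j : ℕ) then dsort u j else 0)
        = ∑ j ∈ (Finset.univ.filter (fun j : Fin p => (j : ℕ) < k)).filter
            (fun j : Fin p => ¬ (j : ℕ) < s), dsort u j := by
      conv_rhs => rw [Finset.sum_filter]
      apply Finset.sum_congr rfl
      intro j _
      simp [Nat.not_lt]
    have e2 : ∑ j ∈ (Finset.univ.filter (fun j : Fin p => (j : ℕ) < k)).filter
        (fun j : Fin p => (j : ℕ) < s), dsort u j = Topk u (min k s) := by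
      rw [Finset.filter_filter, Topk]
      apply Finset.sum_congr _ (fun _ _ => rfl)
      ext j
      simp only [Finset.mem_filter, Finset.mem_univ, true_and]
      omega
    rw [e1, ← e2]
    have hdef : Topk u k = ∑ j ∈ Finset.univ.filter (fun j : Fin p => (j : ℕ) < k), dsort u j := rfl
    rw [hdef]
    linarith [hpart]
  rw [hsplit, hH, hT]
  by_cases hks : k ≤ s
  · have hmin : min k s = k := min_eq_left hks
    rw [hmin]
    have h1 := ps1 v w k hk
    rw [← hu] at h1
    have h2 := topk_nonneg u k
    linarith
  · have hmin : min k s = s := min_eq_right (by omega)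
    rw [hmin]
    have h1 := ps2 v w s k (by omega) hk hv
    rw [← hu] at h1
    linarith

end Stmt5

/-- slope-norm algebra for plain vectors. -/
theorem statement_5 {p : ℕ} (lam : Fin p → ℝ)
    (hmono : Antitone lam) (hnonneg : ∀ j, 0 ≤ lam j) (hne : lam ≠ 0)
    (s : ℕ) (hs1 : 1 ≤ s) (hsp : s ≤ p)
    (v w : Fin p → ℝ) (hv : l0 v ≤ s) :
    slopeNorm lam v - slopeNorm lam w ≤ headSum lam s (w - v) - tailSum lam s (w - v) := by
  have hvcard : (Finset.univ.filter fun i => v i ≠ 0).card ≤ s := by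
    have hset : {j | v j ≠ 0} = ↑(Finset.univ.filter fun i => v i ≠ 0) := by
      ext j; simp
    have hv' : Set.ncard {j | v j ≠ 0} ≤ s := hv
    rwa [hset, Set.ncard_coe_finset] at hv'
  have key : 0 ≤ ∑ j : Fin p, lam j *
      (dsort w j + (if (j : ℕ) < s then dsort (w - v) j else 0)
        - (dsort v j + (if s ≤ (j : ℕ) then dsort (w - v) j else 0))) := by
    have heq : ∑ j : Fin p, lam j *
        (dsort w j + (if (j : ℕ) < s then dsort (w - v) j else 0)
          - (dsort v j + (if s ≤ (j : ℕ) then dsort (w - v) j else 0)))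
        = ∑ i ∈ Finset.range p,
            (if h : i < p then lam ⟨i, h⟩ else 0) *
            (if h : i < p then
              (dsort w ⟨i, h⟩ + (if i < s then dsort (w - v) ⟨i, h⟩ else 0)
                - (dsort v ⟨i, h⟩ + (if s ≤ i then dsort (w - v) ⟨i, h⟩ else 0))) else 0) := by
      rw [← Fin.sum_univ_eq_sum_range (fun i =>
          (if h : i < p then lam ⟨i, h⟩ else 0) *
          (if h : i < p then
            (dsort w ⟨i, h⟩ + (if i < s then dsort (w - v) ⟨i, h⟩ else 0)
              - (dsort v ⟨i, h⟩ + (if s ≤ i then dsort (w - v) ⟨i, h⟩ else 0))) else 0)) p]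
      apply Finset.sum_congr rfl
      intro j _
      simp [j.isLt]
    rw [heq]
    apply Stmt5.abel_nonneg p
    · intro i j hij hj
      rw [dif_pos hj, dif_pos (lt_of_le_of_lt hij hj)]
      exact hmono (Fin.mk_le_mk.mpr hij)
    · intro i hi
      rw [dif_pos hi]
      exact hnonneg _
    · intro k hk
      rw [Stmt5.sum_range_dite (fun j : Fin p =>
        (dsort w j + (if (j : ℕ) < s then dsort (w - v) j else 0)
          - (dsort v j + (if s ≤ (j : ℕ) then dsort (w - v) j else 0)))) k hk]
      exact Stmt5.ps_main v w s k hk hvcard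
  have expand : ∑ j : Fin p, lam j *
      (dsort w j + (if (j : ℕ) < s then dsort (w - v) j else 0)
        - (dsort v j + (if s ≤ (j : ℕ) then dsort (w - v) j else 0)))
      = slopeNorm lam w + headSum lam s (w - v) - slopeNorm lam v - tailSum lam s (w - v) := by
    simp only [slopeNorm, headSum, tailSum]
    rw [Finset.sum_filter, Finset.sum_filter,
        ← Finset.sum_add_distrib, ← Finset.sum_sub_distrib, ← Finset.sum_sub_distrib]
    apply Finset.sum_congr rfl
    intro j _
    split_ifs <;> ring
  rw [expand] at key
  linarith
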